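/- Let A be an M×M Hermitian positive semidefinite complex matrix with eigenvalue decomposition A = U Λ Uᴴ, eigenvalues λ₁ ≥ … ≥ λ_M ≥ 0 in nonincreasing order, let 𝒾 > 0, let N be a positive integer, and let r be the largest integer such that λ_n > (∏_{i=1}^{r} λ_i / 2^{𝒾})^{1/r} for all n ≤ r. Define Γ = diag(γ₁,…,γ_N) by: if N ≤ r, γ_n = (2^{𝒾}/∏_{i=1}^{N} λ_i)^{1/N} − λ_n⁻¹ for n ≤ N; if N > r, γ_n = (2^{𝒾}/∏_{i=1}^{r} λ_i)^{1/r} − λ_n⁻¹ for n ≤ r and γ_n = 0 for r < n ≤ N. Let U_N be the first N columns of U and S any N×N unitary matrix. Then T = U_N Γ^{1/2} S satisfies log₂ det(I_N + Tᴴ A T) = 𝒾, and among all M×N complex matrices T' with log₂ det(I_N + T'ᴴ A T') = 𝒾 it minimizes tr(T'ᴴ T'). -/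

import Mathlib

open Matrix BigOperators
open scoped ComplexOrder

/-- per-mode loading value -/
noncomputable def gfun (μ x : ℝ) : ℝ := if x * μ ≤ 1 then 0 else Real.log (x * μ) - 1 + (x * μ)⁻¹

lemma one_sub_inv_le_log {y : ℝ} (hy : 0 < y) : 1 - y⁻¹ ≤ Real.log y := by
  have h := Real.log_le_sub_one_of_pos (x := y⁻¹) (by positivity)
  rw [Real.log_inv] at h
  linarith

lemma gfun_nonneg (μ x : ℝ) : 0 ≤ gfun μ x := by
  unfold gfun
  split_ifs with h
  · exact le_rfl
  · push_neg at h
    have h0 : (0:ℝ) < x * μ := lt_trans one_pos h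
    have := one_sub_inv_le_log h0
    linarith

lemma gfun_mono {μ x y : ℝ} (hx : 0 ≤ x * μ) (hxy : x * μ ≤ y * μ) : gfun μ x ≤ gfun μ y := by
  unfold gfun
  split_ifs with h1 h2 h2
  · exact le_rfl
  · push_neg at h2
    have h0 : (0:ℝ) < y * μ := lt_trans one_pos h2
    have := one_sub_inv_le_log h0
    linarith
  · push_neg at h1; linarith
  · -- 1 < x*μ ≤ y*μ : monotonicity of log t - 1 + 1/t for t ≥ 1
    push_neg at h1 h2
    set a := x * μ with ha
    set b := y * μ with hb
    have ha1 : 1 < a := h1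
    have hb1 : 1 < b := h2
    have hA : (0:ℝ) < a := lt_trans one_pos ha1
    have hB : (0:ℝ) < b := lt_trans one_pos hb1
    have key : 1 - a / b ≤ Real.log (b / a) := by
      have := one_sub_inv_le_log (y := b / a) (by positivity)
      rwa [inv_div] at this
    have hlog : Real.log (b / a) = Real.log b - Real.log a := Real.log_div (ne_of_gt hB) (ne_of_gt hA)
    rw [hlog] at key
    -- need : log a - 1 + a⁻¹ ≤ log b - 1 + b⁻¹
    -- from key : 1 - a/b ≤ log b - log a, and a⁻¹ - b⁻¹ = (b - a)/(ab) ≤ (b-a)/b = 1 - a/b since a ≥ 1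
    have h2' : a⁻¹ - b⁻¹ ≤ 1 - a / b := by
      rw [div_eq_mul_inv]
      have hbab : b ≤ a * b := le_mul_of_one_le_left (le_of_lt hB) (le_of_lt ha1)
      have h3 : a⁻¹ - b⁻¹ = (b - a) * (a * b)⁻¹ := by
        field_simp
      have h4 : 1 - a * b⁻¹ = (b - a) * b⁻¹ := by
        field_simp
      rw [h3, h4]
      rcases le_or_gt a b with hab | hab
      · apply mul_le_mul_of_nonneg_left _ (by linarith)
        exact inv_anti₀ hB hbab
      · nlinarith [inv_pos.mpr hB, inv_pos.mpr (mul_pos hA hB), mul_pos hA hB]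
    linarith

lemma tangent_log {μ x θ : ℝ} (hμ : 0 < μ) (hx : 0 < x) (hθ : 0 ≤ θ) :
    Real.log (1 + θ) ≤ θ / (x * μ) + gfun μ x := by
  have hxμ : 0 < x * μ := mul_pos hx hμ
  unfold gfun
  split_ifs with h
  · have h1 : Real.log (1 + θ) ≤ θ := by
      have := Real.log_le_sub_one_of_pos (x := 1 + θ) (by linarith)
      linarith
    have h2 : θ ≤ θ / (x * μ) := by
      rw [le_div_iff₀ hxμ]
      nlinarith
    linarith
  · push_neg at h
    have h1θ : (0:ℝ) < 1 + θ := by linarith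
    have key := Real.log_le_sub_one_of_pos (x := (1 + θ) / (x * μ)) (by positivity)
    rw [Real.log_div (ne_of_gt h1θ) (ne_of_gt hxμ)] at key
    have e : (1 + θ) / (x * μ) = θ / (x*μ) + (x*μ)⁻¹ := by field_simp; ring
    rw [e] at key
    linarith


lemma topk_select {M N : ℕ} (v t : Fin M → ℝ)
    (hmono : ∀ i j : Fin M, i ≤ j → v j ≤ v i)
    (hv : ∀ m, 0 ≤ v m) (ht0 : ∀ m, 0 ≤ t m) (ht1 : ∀ m, t m ≤ 1)
    (htot : ∑ m, t m ≤ (N : ℝ)) :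
    ∑ m, t m * v m ≤ ∑ m ∈ Finset.univ.filter (fun m : Fin M => (m : ℕ) < N), v m := by
  set F := Finset.univ.filter (fun m : Fin M => (m : ℕ) < N) with hF
  by_cases hNM : N < M
  · set nn : Fin M := ⟨N, hNM⟩ with hnn
    set c := v nn with hc
    have hc0 : 0 ≤ c := hv nn
    have hFIio : F = Finset.Iio nn := by
      ext m; simp only [hF, Finset.mem_filter, Finset.mem_univ, true_and, Finset.mem_Iio, Fin.lt_def]; exact Iff.rfl
    have hcard : F.card = N := by rw [hFIio, Fin.card_Iio]
    have split := (Finset.sum_filter_add_sum_filter_not Finset.univ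
      (fun m : Fin M => (m : ℕ) < N) (fun m => t m * v m)).symm
    have splitT := (Finset.sum_filter_add_sum_filter_not Finset.univ
      (fun m : Fin M => (m : ℕ) < N) t).symm
    have hA : ∀ m ∈ F, t m * v m ≤ v m + (t m - 1) * c := by
      intro m hm
      have hmN : m ≤ nn := by
        simp only [hF, Finset.mem_filter] at hm
        exact le_of_lt (Fin.lt_def.mpr hm.2)
      have hcv : c ≤ v m := hmono m nn hmN
      nlinarith [ht1 m, ht0 m]
    have hB : ∀ m ∈ Finset.univ.filter (fun m : Fin M => ¬ (m : ℕ) < N),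
        t m * v m ≤ t m * c := by
      intro m hm
      simp only [Finset.mem_filter] at hm
      have : nn ≤ m := by
        rw [Fin.le_def]
        exact le_of_not_gt hm.2
      exact mul_le_mul_of_nonneg_left (hmono nn m this) (ht0 m)
    calc ∑ m, t m * v m
        = ∑ m ∈ F, t m * v m
          + ∑ m ∈ Finset.univ.filter (fun m : Fin M => ¬ (m : ℕ) < N), t m * v m := split
      _ ≤ ∑ m ∈ F, (v m + (t m - 1) * c)
          + ∑ m ∈ Finset.univ.filter (fun m : Fin M => ¬ (m : ℕ) < N), t m * c :=
            add_le_add (Finset.sum_le_sum hA) (Finset.sum_le_sum hB)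
      _ = ∑ m ∈ F, v m
          + ((∑ m ∈ F, t m
            + ∑ m ∈ Finset.univ.filter (fun m : Fin M => ¬ (m : ℕ) < N), t m) - N) * c := by
            rw [Finset.sum_add_distrib, ← Finset.sum_mul, ← Finset.sum_mul,
              Finset.sum_sub_distrib, Finset.sum_const, hcard]
            ring
      _ ≤ ∑ m ∈ F, v m := by
            have h1 : (∑ m ∈ F, t m
              + ∑ m ∈ Finset.univ.filter (fun m : Fin M => ¬ (m : ℕ) < N), t m) = ∑ m, t m := by
              rw [← splitT]
            rw [h1]
            nlinarith [htot, hc0]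
  · push_neg at hNM
    have hfilter : F = Finset.univ := by
      ext m; simp [hF, lt_of_lt_of_le m.2 hNM]
    rw [hfilter]
    apply Finset.sum_le_sum
    intro m _
    calc t m * v m ≤ 1 * v m := mul_le_mul_of_nonneg_right (ht1 m) (hv m)
    _ = v m := one_mul _


lemma rpow_inv_natpow {x : ℝ} (hx : 0 < x) {k : ℕ} (hk : 0 < k) : (x ^ ((1:ℝ)/k)) ^ k = x := by
  rw [← Real.rpow_natCast (x ^ ((1:ℝ)/k)) k, ← Real.rpow_mul hx.le, one_div,
    inv_mul_cancel₀ (by exact_mod_cast hk.ne'), Real.rpow_one]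

lemma sum_filter_fin_eq {M N : ℕ} (hNM : N ≤ M) (f : ℕ → ℝ) :
    ∑ m ∈ Finset.univ.filter (fun m : Fin M => (m:ℕ) < N), f (m:ℕ)
      = ∑ n ∈ Finset.range N, f n := by
  rw [Finset.sum_filter, Fin.sum_univ_eq_sum_range (fun i => if i < N then f i else 0) M]
  rw [← Finset.sum_subset (Finset.range_subset_range.mpr hNM)
    (fun x _ hx => by rw [if_neg (by simpa using hx)])]
  exact Finset.sum_congr rfl fun x hx => if_pos (Finset.mem_range.mp hx)

-- E matrix facts
section Emat
variable {M N : ℕ} (hNM : N ≤ M)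

lemma submatrix_eq_mul_E (U : Matrix (Fin M) (Fin M) ℂ) :
    U.submatrix id (Fin.castLE hNM)
      = U * (1 : Matrix (Fin M) (Fin M) ℂ).submatrix id (Fin.castLE hNM) := by
  ext m n
  simp [Matrix.mul_apply, Matrix.one_apply]

lemma E_conjTranspose_mul_E (B : Matrix (Fin M) (Fin M) ℂ) :
    ((1 : Matrix (Fin M) (Fin M) ℂ).submatrix id (Fin.castLE hNM))ᴴ * B
        * (1 : Matrix (Fin M) (Fin M) ℂ).submatrix id (Fin.castLE hNM)
      = B.submatrix (Fin.castLE hNM) (Fin.castLE hNM) := by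
  ext i j
  simp [Matrix.mul_apply, Matrix.conjTranspose_apply, Matrix.one_apply]

end Emat

lemma key_bound {M N : ℕ} (lam : ℕ → ℝ) (μ : ℝ) (hμ : 0 < μ)
    (hmono : ∀ i j : ℕ, i ≤ j → j < M → lam j ≤ lam i)
    (hnonneg : ∀ n < M, 0 ≤ lam n)
    (hNM : N ≤ M)
    (R : Matrix (Fin M) (Fin M) ℂ) (hR : R.PosSemidef)
    (hrank : R.rank ≤ N)
    (hker : ∀ (m m' : Fin M), lam (m : ℕ) = 0 → R m m' = 0) :
    Real.log ((1 + R).det).re ≤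
      (∑ m : Fin M, (if lam (m : ℕ) = 0 then 0 else (R m m).re / lam (m : ℕ))) / μ
      + ∑ n ∈ Finset.range N, gfun μ (lam n) := by
  classical
  rw [← sum_filter_fin_eq hNM (fun n => gfun μ (lam n))]
  have hH : R.IsHermitian := hR.1
  set V : Matrix (Fin M) (Fin M) ℂ := (hH.eigenvectorUnitary : Matrix (Fin M) (Fin M) ℂ) with hV
  set θ : Fin M → ℝ := hH.eigenvalues with hθdef
  have hθ0 : ∀ n, 0 ≤ θ n := hR.eigenvalues_nonneg
  set c : Fin M → Fin M → ℝ := fun m n => Complex.normSq (V m n) with hc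
  have hc0 : ∀ m n, 0 ≤ c m n := fun m n => Complex.normSq_nonneg _
  -- unitarity
  have hVsV : star V * V = 1 := (Unitary.mem_iff.mp hH.eigenvectorUnitary.2).1
  have hVVs : V * star V = 1 := (Unitary.mem_iff.mp hH.eigenvectorUnitary.2).2
  -- column sums of c are 1
  have hcol : ∀ n, ∑ m, c m n = 1 := by
    intro n
    have h1 : (star V * V) n n = 1 := by rw [hVsV]; simp
    rw [Matrix.mul_apply] at h1
    have h2 : ∀ m, (star V) n m * V m n = (Complex.normSq (V m n) : ℂ) := by
      intro m
      rw [Matrix.star_apply, Complex.star_def, mul_comm, Complex.mul_conj]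
    rw [Finset.sum_congr rfl (fun m _ => h2 m)] at h1
    have h3 : ((∑ m, Complex.normSq (V m n) : ℝ) : ℂ) = 1 := by push_cast at h1 ⊢; exact h1
    exact_mod_cast h3
  -- row sums of c are 1
  have hrow : ∀ m, ∑ n, c m n = 1 := by
    intro m
    have h1 : (V * star V) m m = 1 := by rw [hVVs]; simp
    rw [Matrix.mul_apply] at h1
    have h2 : ∀ n, V m n * (star V) n m = (Complex.normSq (V m n) : ℂ) := by
      intro n
      rw [Matrix.star_apply, Complex.star_def, Complex.mul_conj]
    rw [Finset.sum_congr rfl (fun n _ => h2 n)] at h1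
    have h3 : ((∑ n, Complex.normSq (V m n) : ℝ) : ℂ) = 1 := by push_cast at h1 ⊢; exact h1
    exact_mod_cast h3
  -- entry formula
  have hentry : ∀ m m', R m m' = ∑ n, V m n * (θ n : ℂ) * star (V m' n) := by
    intro m m'
    conv_lhs => rw [hH.spectral_theorem, Unitary.conjStarAlgAut_apply]
    rw [Matrix.mul_apply]
    refine Finset.sum_congr rfl fun n _ => ?_
    rw [Matrix.mul_diagonal, Matrix.star_apply]
    simp [hV, hθdef]
  -- diagonal entries
  have hdiag : ∀ m, (R m m).re = ∑ n, θ n * c m n := by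
    intro m
    rw [hentry m m, Complex.re_sum]
    refine Finset.sum_congr rfl fun n _ => ?_
    have e1 : V m n * (θ n : ℂ) * star (V m n) = ((θ n * Complex.normSq (V m n) : ℝ) : ℂ) := by
      rw [Complex.star_def]
      rw [show V m n * (θ n : ℂ) * (starRingEnd ℂ) (V m n)
        = (θ n : ℂ) * (V m n * (starRingEnd ℂ) (V m n)) by ring, Complex.mul_conj]
      push_cast
      ring
    rw [e1, Complex.ofReal_re]
  -- kernel columns
  have hcol0 : ∀ (m n : Fin M), θ n ≠ 0 → lam (m : ℕ) = 0 → V m n = 0 := by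
    intro m n hθn hlam
    have h1 := congrFun (hH.mulVec_eigenvectorBasis n) m
    have h2 : (R *ᵥ ⇑(hH.eigenvectorBasis n)) m = 0 := by
      rw [Matrix.mulVec, dotProduct]
      apply Finset.sum_eq_zero
      intro m' _
      rw [hker m m' hlam, zero_mul]
    rw [h2] at h1
    have h3 : (0 : ℂ) = (θ n : ℂ) * (hH.eigenvectorBasis n) m := by
      simpa [Pi.smul_apply, Complex.real_smul] using h1
    have h4 : (hH.eigenvectorBasis n) m = 0 := by
      rcases mul_eq_zero.mp h3.symm with h | h
      · exact absurd (by exact_mod_cast h) hθn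
      · exact h
    have h5 : V m n = (hH.eigenvectorBasis n) m := by
      simp [hV]
    rw [h5, h4]
  -- determinant formula
  have h1R : (1 : Matrix (Fin M) (Fin M) ℂ) + R
      = V * (1 + Matrix.diagonal (RCLike.ofReal ∘ θ)) * star V := by
    rw [Matrix.mul_add, Matrix.add_mul, Matrix.mul_one, hVVs]
    congr 1
    exact hH.spectral_theorem
  have hdetVV : (V.det) * (star V).det = 1 := by
    rw [← Matrix.det_mul, hVVs, Matrix.det_one]
  have hdiagsum : (1 : Matrix (Fin M) (Fin M) ℂ) + Matrix.diagonal (RCLike.ofReal ∘ θ)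
      = Matrix.diagonal (fun n => 1 + (θ n : ℂ)) := by
    rw [← Matrix.diagonal_one, Matrix.diagonal_add]
    rfl
  have hdet1 : (1 + R).det = ((∏ n, (1 + θ n) : ℝ) : ℂ) := by
    rw [h1R, Matrix.det_mul, Matrix.det_mul, mul_right_comm, hdetVV, one_mul, hdiagsum,
      Matrix.det_diagonal]
    push_cast
    rfl
  have hdetre : ((1 + R).det).re = ∏ n, (1 + θ n) := by rw [hdet1, Complex.ofReal_re]
  have hprodpos : (0:ℝ) < ∏ n, (1 + θ n) :=
    Finset.prod_pos fun n _ => by have := hθ0 n; linarith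
  have hlogdet : Real.log ((1 + R).det).re = ∑ n, Real.log (1 + θ n) := by
    rw [hdetre]
    exact Real.log_prod fun n _ => by have := hθ0 n; positivity
  -- the weights
  set s : Fin M → ℝ := fun n => ∑ m : Fin M, (if lam (m:ℕ) = 0 then 0 else c m n / lam (m:ℕ)) with hs
  set supp := Finset.univ.filter (fun n : Fin M => θ n ≠ 0) with hsupp
  set t : Fin M → ℝ := fun m => ∑ n ∈ supp, c m n with ht
  have hczero : ∀ (m n : Fin M), θ n ≠ 0 → lam (m:ℕ) = 0 → c m n = 0 := by
    intro m n h1 h2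
    simp [hc, hcol0 m n h1 h2]
  -- per-eigenvalue tangent bound
  have hbound : ∀ n, Real.log (1 + θ n) ≤ θ n * s n / μ
      + (if θ n = 0 then 0 else ∑ m : Fin M, c m n * gfun μ (lam (m:ℕ))) := by
    intro n
    by_cases hn : θ n = 0
    · simp [hn]
    · rw [if_neg hn]
      have hstep1 : Real.log (1 + θ n) = ∑ m, c m n * Real.log (1 + θ n) := by
        rw [← Finset.sum_mul, hcol n, one_mul]
      rw [hstep1]
      have hstep2 : ∀ m : Fin M, c m n * Real.log (1 + θ n)
          ≤ θ n * (if lam (m:ℕ) = 0 then 0 else c m n / lam (m:ℕ)) / μ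
            + c m n * gfun μ (lam (m:ℕ)) := by
        intro m
        by_cases hm : lam (m:ℕ) = 0
        · rw [hczero m n hn hm, hm]
          simp
        · have hlam : 0 < lam (m:ℕ) := lt_of_le_of_ne (hnonneg _ m.2) (Ne.symm hm)
          rw [if_neg hm]
          have := mul_le_mul_of_nonneg_left (tangent_log hμ hlam (hθ0 n)) (hc0 m n)
          have e : c m n * (θ n / (lam (m:ℕ) * μ) + gfun μ (lam (m:ℕ)))
              = θ n * (c m n / lam (m:ℕ)) / μ + c m n * gfun μ (lam (m:ℕ)) := by
            field_simp
          linarith [this, e ▸ this]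
      calc ∑ m : Fin M, c m n * Real.log (1 + θ n)
          ≤ ∑ m : Fin M, (θ n * (if lam (m:ℕ) = 0 then 0 else c m n / lam (m:ℕ)) / μ
            + c m n * gfun μ (lam (m:ℕ))) := Finset.sum_le_sum fun m _ => hstep2 m
        _ = θ n * s n / μ + ∑ m : Fin M, c m n * gfun μ (lam (m:ℕ)) := by
            rw [Finset.sum_add_distrib, ← Finset.sum_div, ← Finset.mul_sum]
  -- sum the bounds
  have hsum1 : ∑ n, θ n * s n / μ
      = (∑ m : Fin M, (if lam (m:ℕ) = 0 then 0 else (R m m).re / lam (m:ℕ))) / μ := by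
    rw [← Finset.sum_div]
    congr 1
    have e1 : ∀ n, θ n * s n
        = ∑ m : Fin M, (if lam (m:ℕ) = 0 then 0 else θ n * c m n / lam (m:ℕ)) := by
      intro n
      rw [hs, Finset.mul_sum]
      exact Finset.sum_congr rfl fun m _ => by split_ifs <;> simp [mul_div_assoc]
    rw [Finset.sum_congr rfl fun n _ => e1 n, Finset.sum_comm]
    refine Finset.sum_congr rfl fun m _ => ?_
    by_cases hm : lam (m:ℕ) = 0
    · simp [hm]
    · rw [if_neg hm, hdiag m, Finset.sum_div]
      exact Finset.sum_congr rfl fun n _ => by rw [if_neg hm, mul_div_assoc]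
  have hsum2 : ∑ n, (if θ n = 0 then 0 else ∑ m : Fin M, c m n * gfun μ (lam (m:ℕ)))
      ≤ ∑ m ∈ Finset.univ.filter (fun m : Fin M => (m:ℕ) < N), gfun μ (lam (m:ℕ)) := by
    have e1 : ∑ n, (if θ n = 0 then 0 else ∑ m : Fin M, c m n * gfun μ (lam (m:ℕ)))
        = ∑ n ∈ supp, ∑ m : Fin M, c m n * gfun μ (lam (m:ℕ)) := by
      rw [hsupp, Finset.sum_filter]
      exact Finset.sum_congr rfl fun n _ => by by_cases hn : θ n = 0 <;> simp [hn]
    rw [e1, Finset.sum_comm]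
    have e2 : ∀ m : Fin M, ∑ n ∈ supp, c m n * gfun μ (lam (m:ℕ))
        = t m * gfun μ (lam (m:ℕ)) := by
      intro m
      rw [ht, ← Finset.sum_mul]
    rw [Finset.sum_congr rfl fun m _ => e2 m]
    apply topk_select
    · intro i j hij
      exact gfun_mono (mul_nonneg (hnonneg _ j.2) hμ.le)
        (mul_le_mul_of_nonneg_right (hmono _ _ hij j.2) hμ.le)
    · intro m; exact gfun_nonneg _ _
    · intro m; exact Finset.sum_nonneg fun n _ => hc0 m n
    · intro m
      rw [ht]
      calc ∑ n ∈ supp, c m n ≤ ∑ n, c m n :=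
            Finset.sum_le_sum_of_subset_of_nonneg (Finset.filter_subset _ _)
              (fun n _ _ => hc0 m n)
        _ = 1 := hrow m
    · have e3 : ∑ m : Fin M, t m = ∑ n ∈ supp, ∑ m : Fin M, c m n := Finset.sum_comm
      rw [e3, Finset.sum_congr rfl (fun n _ => hcol n), Finset.sum_const, nsmul_eq_mul, mul_one]
      have hcard : supp.card = R.rank := by
        rw [hH.rank_eq_card_non_zero_eigs, Fintype.card_subtype, hsupp]
      exact_mod_cast Nat.cast_le.mpr (hcard ▸ hrank)
  calc Real.log ((1 + R).det).re = ∑ n, Real.log (1 + θ n) := hlogdet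
    _ ≤ ∑ n, (θ n * s n / μ
        + (if θ n = 0 then 0 else ∑ m : Fin M, c m n * gfun μ (lam (m:ℕ)))) :=
          Finset.sum_le_sum fun n _ => hbound n
    _ = ∑ n, θ n * s n / μ
        + ∑ n, (if θ n = 0 then 0 else ∑ m : Fin M, c m n * gfun μ (lam (m:ℕ))) :=
          Finset.sum_add_distrib
    _ ≤ (∑ m : Fin M, (if lam (m:ℕ) = 0 then 0 else (R m m).re / lam (m:ℕ))) / μ
        + ∑ m ∈ Finset.univ.filter (fun m : Fin M => (m:ℕ) < N), gfun μ (lam (m:ℕ)) := by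
          rw [hsum1]
          exact add_le_add_right hsum2 _

noncomputable def muWF (lam : ℕ → ℝ) (Info : ℝ) (k : ℕ) : ℝ :=
  (2 ^ Info / ∏ i ∈ Finset.range k, lam i) ^ ((1:ℝ)/k)

lemma struct_facts {M N r : ℕ} (lam : ℕ → ℝ) (Info : ℝ)
    (hmono : ∀ i j : ℕ, i ≤ j → j < M → lam j ≤ lam i)
    (hnonneg : ∀ n < M, 0 ≤ lam n)
    (hN : 0 < N) (hNM : N ≤ M) (hr : 0 < r) (hrM : r ≤ M)
    (hactive : ∀ n < r,
      ((∏ i ∈ Finset.range r, lam i) / 2 ^ Info) ^ ((1 : ℝ) / r) < lam n)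
    (hmax : ∀ r', r < r' → r' ≤ M →
      ¬ (∀ n < r',
        ((∏ i ∈ Finset.range r', lam i) / 2 ^ Info) ^ ((1 : ℝ) / r') < lam n)) :
    0 < muWF lam Info (min N r) ∧
    (∀ n < min N r, 1 < lam n * muWF lam Info (min N r)) ∧
    (∀ m, min N r ≤ m → m < N → lam m * muWF lam Info (min N r) ≤ 1) ∧
    muWF lam Info (min N r) ^ (min N r) * ∏ i ∈ Finset.range (min N r), lam i = 2 ^ Info ∧
    (∀ n < min N r, 0 < lam n) := by
  have h2pos : (0:ℝ) < 2 ^ Info := Real.rpow_pos_of_pos two_pos Info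
  have hcr_nonneg : 0 ≤ ((∏ i ∈ Finset.range r, lam i) / 2 ^ Info) ^ ((1:ℝ)/r) :=
    Real.rpow_nonneg (div_nonneg (Finset.prod_nonneg fun i hi =>
      hnonneg i (lt_of_lt_of_le (Finset.mem_range.mp hi) hrM)) h2pos.le) _
  have hlam_pos : ∀ n < r, 0 < lam n := fun n hn => lt_of_le_of_lt hcr_nonneg (hactive n hn)
  have hPr_pos : 0 < ∏ i ∈ Finset.range r, lam i :=
    Finset.prod_pos fun i hi => hlam_pos i (Finset.mem_range.mp hi)
  have hcr_pos : 0 < ((∏ i ∈ Finset.range r, lam i) / 2 ^ Info) ^ ((1:ℝ)/r) :=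
    Real.rpow_pos_of_pos (div_pos hPr_pos h2pos) _
  set k := min N r with hkdef
  have hk_pos : 0 < k := lt_min hN hr
  have hkN : k ≤ N := min_le_left _ _
  have hkr : k ≤ r := min_le_right _ _
  have hlam_k_pos : ∀ n < k, 0 < lam n := fun n hn => hlam_pos n (lt_of_lt_of_le hn hkr)
  have hPk_pos : 0 < ∏ i ∈ Finset.range k, lam i :=
    Finset.prod_pos fun i hi => hlam_pos i (lt_of_lt_of_le (Finset.mem_range.mp hi) hkr)
  have hμ_pos : 0 < muWF lam Info k := Real.rpow_pos_of_pos (div_pos h2pos hPk_pos) _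
  have hμk : muWF lam Info k ^ k = 2 ^ Info / ∏ i ∈ Finset.range k, lam i :=
    rpow_inv_natpow (div_pos h2pos hPk_pos) hk_pos
  have hμinv : (muWF lam Info k)⁻¹ = ((∏ i ∈ Finset.range k, lam i) / 2 ^ Info) ^ ((1:ℝ)/k) := by
    rw [muWF, ← Real.inv_rpow (div_pos h2pos hPk_pos).le, inv_div]
  have hckk : (((∏ i ∈ Finset.range k, lam i) / 2 ^ Info) ^ ((1:ℝ)/k)) ^ k
      = (∏ i ∈ Finset.range k, lam i) / 2 ^ Info :=
    rpow_inv_natpow (div_pos hPk_pos h2pos) hk_pos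
  have hcrr : (((∏ i ∈ Finset.range r, lam i) / 2 ^ Info) ^ ((1:ℝ)/r)) ^ r
      = (∏ i ∈ Finset.range r, lam i) / 2 ^ Info :=
    rpow_inv_natpow (div_pos hPr_pos h2pos) hr
  have hck_le_cr : (muWF lam Info k)⁻¹
      ≤ ((∏ i ∈ Finset.range r, lam i) / 2 ^ Info) ^ ((1:ℝ)/r) := by
    rw [hμinv]
    rcases eq_or_lt_of_le hkr with heq | hlt
    · rw [heq]
    · have hsplit : (∏ i ∈ Finset.range k, lam i) * ∏ i ∈ Finset.Ico k r, lam i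
          = ∏ i ∈ Finset.range r, lam i := by
        simp only [Finset.range_eq_Ico]
        exact Finset.prod_Ico_consecutive _ (Nat.zero_le k) hkr
      set cr := ((∏ i ∈ Finset.range r, lam i) / 2 ^ Info) ^ ((1:ℝ)/r) with hcr
      have hIco_ge : cr ^ (r - k) ≤ ∏ i ∈ Finset.Ico k r, lam i := by
        calc cr ^ (r-k) = ∏ _i ∈ Finset.Ico k r, cr := by
              rw [Finset.prod_const, Nat.card_Ico]
          _ ≤ ∏ i ∈ Finset.Ico k r, lam i :=
              Finset.prod_le_prod (fun i _ => hcr_nonneg)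
                (fun i hi => (hactive i (Finset.mem_Ico.mp hi).2).le)
      have h1 : (((∏ i ∈ Finset.range k, lam i) / 2 ^ Info) ^ ((1:ℝ)/k)) ^ k * cr ^ (r-k)
          ≤ cr ^ k * cr ^ (r-k) := by
        rw [hckk, ← pow_add, Nat.add_sub_cancel' hkr, hcrr, ← hsplit]
        calc (∏ i ∈ Finset.range k, lam i) / 2 ^ Info * cr ^ (r-k)
            ≤ (∏ i ∈ Finset.range k, lam i) / 2 ^ Info * ∏ i ∈ Finset.Ico k r, lam i :=
              mul_le_mul_of_nonneg_left hIco_ge (div_nonneg hPk_pos.le h2pos.le)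
          _ = (∏ i ∈ Finset.range k, lam i) * (∏ i ∈ Finset.Ico k r, lam i) / 2 ^ Info := by
              ring
      have h2 := le_of_mul_le_mul_right h1 (pow_pos hcr_pos _)
      exact le_of_pow_le_pow_left₀ hk_pos.ne' hcr_nonneg h2
  have hactive_k : ∀ n < k, 1 < lam n * muWF lam Info k := by
    intro n hn
    have h1 : (muWF lam Info k)⁻¹ < lam n :=
      lt_of_le_of_lt hck_le_cr (hactive n (lt_of_lt_of_le hn hkr))
    calc (1:ℝ) = (muWF lam Info k)⁻¹ * muWF lam Info k := (inv_mul_cancel₀ hμ_pos.ne').symm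
      _ < lam n * muWF lam Info k := mul_lt_mul_of_pos_right h1 hμ_pos
  have hinactive : ∀ m, k ≤ m → m < N → lam m * muWF lam Info k ≤ 1 := by
    intro m hkm hmN
    have hrN : r < N := by
      rcases le_or_gt N r with h | h
      · exfalso; rw [hkdef, min_eq_left h] at hkm; omega
      · exact h
    have hkr' : k = r := by rw [hkdef, min_eq_right hrN.le]
    have hrM' : r < M := lt_of_lt_of_le hrN hNM
    have hlamr : lam r ≤ ((∏ i ∈ Finset.range r, lam i) / 2 ^ Info) ^ ((1:ℝ)/r) := by
      by_contra hcon
      push_neg at hcon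
      refine hmax (r+1) (Nat.lt_succ_self r) (by omega) ?_
      intro n hn
      have hlamr_pos : 0 < lam r := lt_trans hcr_pos hcon
      have hP1 : ∏ i ∈ Finset.range (r+1), lam i = (∏ i ∈ Finset.range r, lam i) * lam r :=
        Finset.prod_range_succ _ _
      have hc1p : 0 < (∏ i ∈ Finset.range (r+1), lam i) / 2 ^ Info := by
        rw [hP1]; positivity
      have hc1r : (((∏ i ∈ Finset.range (r+1), lam i) / 2 ^ Info) ^ ((1:ℝ)/((r+1 : ℕ) : ℝ))) ^ (r+1)
          = (∏ i ∈ Finset.range (r+1), lam i) / 2 ^ Info :=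
        rpow_inv_natpow (k := r+1) hc1p (Nat.succ_pos r)
      have hlt : (((∏ i ∈ Finset.range (r+1), lam i) / 2 ^ Info) ^ ((1:ℝ)/((r+1 : ℕ) : ℝ))) ^ (r+1)
          < lam r ^ (r+1) := by
        rw [hc1r, hP1, show (∏ i ∈ Finset.range r, lam i) * lam r / 2 ^ Info
          = ((∏ i ∈ Finset.range r, lam i) / 2 ^ Info) * lam r by ring, ← hcrr]
        calc (((∏ i ∈ Finset.range r, lam i) / 2 ^ Info) ^ ((1:ℝ)/r)) ^ r * lam r
            < lam r ^ r * lam r :=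
              mul_lt_mul_of_pos_right (pow_lt_pow_left₀ hcon hcr_nonneg hr.ne') hlamr_pos
          _ = lam r ^ (r+1) := by rw [pow_succ]
      have hfin : ((∏ i ∈ Finset.range (r+1), lam i) / 2 ^ Info) ^ ((1:ℝ)/((r+1 : ℕ) : ℝ)) < lam r :=
        lt_of_pow_lt_pow_left₀ _ hlamr_pos.le hlt
      calc ((∏ i ∈ Finset.range (r+1), lam i) / 2 ^ Info) ^ ((1:ℝ)/((r+1 : ℕ) : ℝ)) < lam r := hfin
        _ ≤ lam n := hmono n r (by omega) hrM'
    have h2 : lam m ≤ ((∏ i ∈ Finset.range r, lam i) / 2 ^ Info) ^ ((1:ℝ)/r) :=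
      le_trans (hmono r m (hkr' ▸ hkm) (lt_of_lt_of_le hmN hNM)) hlamr
    have h3 : lam m ≤ (muWF lam Info k)⁻¹ := by
      rw [hμinv, hkr']; exact h2
    calc lam m * muWF lam Info k ≤ (muWF lam Info k)⁻¹ * muWF lam Info k :=
          mul_le_mul_of_nonneg_right h3 hμ_pos.le
      _ = 1 := inv_mul_cancel₀ hμ_pos.ne'
  refine ⟨hμ_pos, hactive_k, hinactive, ?_, hlam_k_pos⟩
  rw [hμk]
  field_simp


section Emat
variable {M N : ℕ}

lemma diag_submatrix (hNM : N ≤ M) (f : Fin M → ℂ) :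
    (Matrix.diagonal f).submatrix (Fin.castLE hNM) (Fin.castLE hNM)
      = Matrix.diagonal (fun n : Fin N => f (Fin.castLE hNM n)) := by
  ext i j
  by_cases h : i = j
  · subst h; simp
  · rw [Matrix.submatrix_apply, Matrix.diagonal_apply_ne, Matrix.diagonal_apply_ne _ h]
    exact fun hc => h (Fin.castLE_injective hNM hc)

lemma TAT_eq (hNM : N ≤ M)
    (U : Matrix (Fin M) (Fin M) ℂ) (hU : U ∈ Matrix.unitaryGroup (Fin M) ℂ)
    (S : Matrix (Fin N) (Fin N) ℂ)
    (lam : ℕ → ℝ) (gam : ℕ → ℝ) (hg : ∀ n < N, 0 ≤ gam n) :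
    (U.submatrix id (Fin.castLE hNM) *
        Matrix.diagonal (fun n : Fin N => ((Real.sqrt (gam n) : ℝ) : ℂ)) * S)ᴴ
      * (U * Matrix.diagonal (fun i : Fin M => ((lam i : ℝ) : ℂ)) * Uᴴ)
      * (U.submatrix id (Fin.castLE hNM) *
        Matrix.diagonal (fun n : Fin N => ((Real.sqrt (gam n) : ℝ) : ℂ)) * S)
    = Sᴴ * Matrix.diagonal (fun n : Fin N => ((gam (n : ℕ) * lam (n : ℕ) : ℝ) : ℂ)) * S := by
  have hUsU : Uᴴ * U = 1 := by
    rw [← Matrix.star_eq_conjTranspose]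
    exact Matrix.mem_unitaryGroup_iff'.mp hU
  set E := (1 : Matrix (Fin M) (Fin M) ℂ).submatrix id (Fin.castLE hNM) with hE
  set G := Matrix.diagonal (fun n : Fin N => ((Real.sqrt (gam n) : ℝ) : ℂ)) with hG
  set Λ := Matrix.diagonal (fun i : Fin M => ((lam i : ℝ) : ℂ)) with hΛ
  rw [submatrix_eq_mul_E hNM U, ← hE]
  have hGH : Gᴴ = G := by
    rw [hG]
    ext i j
    rw [Matrix.conjTranspose_apply]
    by_cases h : i = j
    · subst h
      rw [Matrix.diagonal_apply_eq, Complex.star_def, Complex.conj_ofReal]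
    · rw [Matrix.diagonal_apply_ne _ fun hc => h hc.symm, Matrix.diagonal_apply_ne _ h,
        star_zero]
  calc (U * E * G * S)ᴴ * (U * Λ * Uᴴ) * (U * E * G * S)
      = Sᴴ * Gᴴ * Eᴴ * (Uᴴ * U) * Λ * (Uᴴ * U) * (E * G * S) := by
        simp only [Matrix.conjTranspose_mul, Matrix.mul_assoc]
    _ = Sᴴ * Gᴴ * (Eᴴ * Λ * E) * G * S := by
        rw [hUsU]
        simp only [Matrix.mul_one, Matrix.one_mul, Matrix.mul_assoc]
    _ = Sᴴ * G * Matrix.diagonal (fun n : Fin N => ((lam (n : ℕ) : ℝ) : ℂ)) * G * S := by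
        rw [hGH, hE, E_conjTranspose_mul_E hNM, hΛ, diag_submatrix hNM]
        rfl
    _ = Sᴴ * (G * Matrix.diagonal (fun n : Fin N => ((lam (n : ℕ) : ℝ) : ℂ)) * G) * S := by
        simp only [Matrix.mul_assoc]
    _ = Sᴴ * Matrix.diagonal (fun n : Fin N => ((gam (n : ℕ) * lam (n : ℕ) : ℝ) : ℂ)) * S := by
        have hdd : Matrix.diagonal (fun n : Fin N => ((Real.sqrt (gam ↑n) : ℝ) : ℂ))
            * Matrix.diagonal (fun n : Fin N => ((lam ↑n : ℝ) : ℂ))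
            * Matrix.diagonal (fun n : Fin N => ((Real.sqrt (gam ↑n) : ℝ) : ℂ))
            = Matrix.diagonal (fun n : Fin N => ((gam ↑n * lam ↑n : ℝ) : ℂ)) := by
          rw [Matrix.diagonal_mul_diagonal, Matrix.diagonal_mul_diagonal]
          ext i j
          by_cases h : i = j
          · subst h
            simp only [Matrix.diagonal_apply_eq]
            have h1 : Real.sqrt (gam ↑i) * Real.sqrt (gam ↑i) = gam ↑i :=
              Real.mul_self_sqrt (hg i i.2)
            calc (↑(Real.sqrt (gam ↑i)) : ℂ) * ↑(lam ↑i) * ↑(Real.sqrt (gam ↑i))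
                = ((Real.sqrt (gam ↑i) * Real.sqrt (gam ↑i) * lam ↑i : ℝ) : ℂ) := by
                  push_cast; ring
              _ = ((gam ↑i * lam ↑i : ℝ) : ℂ) := by rw [h1]
          · rw [Matrix.diagonal_apply_ne _ h, Matrix.diagonal_apply_ne _ h]
        rw [hG, hdd]

lemma det_one_add_conj {N : ℕ} (S : Matrix (Fin N) (Fin N) ℂ)
    (hS : S ∈ Matrix.unitaryGroup (Fin N) ℂ) (d : Fin N → ℂ) :
    (1 + Sᴴ * Matrix.diagonal d * S).det = ∏ n, (1 + d n) := by
  have hSsS : Sᴴ * S = 1 := by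
    rw [← Matrix.star_eq_conjTranspose]; exact Matrix.mem_unitaryGroup_iff'.mp hS
  have h1 : (1 : Matrix (Fin N) (Fin N) ℂ) + Sᴴ * Matrix.diagonal d * S
      = Sᴴ * (1 + Matrix.diagonal d) * S := by
    rw [Matrix.mul_add, Matrix.add_mul, Matrix.mul_one, hSsS]
  rw [h1, Matrix.det_mul, Matrix.det_mul, mul_right_comm, ← Matrix.det_mul, hSsS,
    Matrix.det_one, one_mul]
  rw [show (1 : Matrix (Fin N) (Fin N) ℂ) + Matrix.diagonal d
    = Matrix.diagonal (fun n => 1 + d n) by rw [← Matrix.diagonal_one, Matrix.diagonal_add]]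
  exact Matrix.det_diagonal


section Aux
variable {M N : ℕ}

lemma E_conjTranspose_mul_E' (hNM : N ≤ M) (B : Matrix (Fin M) (Fin M) ℂ) :
    ((1 : Matrix (Fin M) (Fin M) ℂ).submatrix id (Fin.castLE hNM))ᴴ * B
        * (1 : Matrix (Fin M) (Fin M) ℂ).submatrix id (Fin.castLE hNM)
      = B.submatrix (Fin.castLE hNM) (Fin.castLE hNM) := by
  ext i j
  simp [Matrix.mul_apply, Matrix.conjTranspose_apply, Matrix.one_apply]

lemma trace_conj (S : Matrix (Fin N) (Fin N) ℂ)
    (hS : S ∈ Matrix.unitaryGroup (Fin N) ℂ) (d : Fin N → ℂ) :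
    (Sᴴ * Matrix.diagonal d * S).trace = ∑ n, d n := by
  have hSSs : S * Sᴴ = 1 := by
    rw [← Matrix.star_eq_conjTranspose]; exact Matrix.mem_unitaryGroup_iff.mp hS
  rw [Matrix.trace_mul_cycle, hSSs, Matrix.one_mul, Matrix.trace_diagonal]

lemma TT_eq (hNM : N ≤ M)
    (U : Matrix (Fin M) (Fin M) ℂ) (hU : U ∈ Matrix.unitaryGroup (Fin M) ℂ)
    (S : Matrix (Fin N) (Fin N) ℂ)
    (gam : ℕ → ℝ) (hg : ∀ n < N, 0 ≤ gam n) :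
    (U.submatrix id (Fin.castLE hNM) *
        Matrix.diagonal (fun n : Fin N => ((Real.sqrt (gam n) : ℝ) : ℂ)) * S)ᴴ
      * (U.submatrix id (Fin.castLE hNM) *
        Matrix.diagonal (fun n : Fin N => ((Real.sqrt (gam n) : ℝ) : ℂ)) * S)
    = Sᴴ * Matrix.diagonal (fun n : Fin N => ((gam (n : ℕ) : ℝ) : ℂ)) * S := by
  have hUsU : Uᴴ * U = 1 := by
    rw [← Matrix.star_eq_conjTranspose]
    exact Matrix.mem_unitaryGroup_iff'.mp hU
  have hsub : U.submatrix id (Fin.castLE hNM)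
      = U * (1 : Matrix (Fin M) (Fin M) ℂ).submatrix id (Fin.castLE hNM) := by
    ext m n
    simp [Matrix.mul_apply, Matrix.one_apply]
  set E := (1 : Matrix (Fin M) (Fin M) ℂ).submatrix id (Fin.castLE hNM) with hE
  set G := Matrix.diagonal (fun n : Fin N => ((Real.sqrt (gam n) : ℝ) : ℂ)) with hG
  rw [hsub]
  have hGH : Gᴴ = G := by
    rw [hG]
    ext i j
    rw [Matrix.conjTranspose_apply]
    by_cases h : i = j
    · subst h
      rw [Matrix.diagonal_apply_eq, Complex.star_def, Complex.conj_ofReal]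
    · rw [Matrix.diagonal_apply_ne _ fun hc => h hc.symm, Matrix.diagonal_apply_ne _ h,
        star_zero]
  have hEE : Eᴴ * E = (1 : Matrix (Fin N) (Fin N) ℂ) := by
    have h1 := E_conjTranspose_mul_E' hNM (1 : Matrix (Fin M) (Fin M) ℂ)
    rw [Matrix.mul_one] at h1
    rw [hE, h1]
    ext i j
    by_cases h : i = j
    · subst h; simp [Matrix.one_apply]
    · rw [Matrix.submatrix_apply, Matrix.one_apply_ne
        (fun hc => h (Fin.castLE_injective hNM hc)), Matrix.one_apply_ne h]
  have hGG : G * G = Matrix.diagonal (fun n : Fin N => ((gam (n : ℕ) : ℝ) : ℂ)) := by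
    rw [hG, Matrix.diagonal_mul_diagonal]
    ext i j
    by_cases h : i = j
    · subst h
      simp only [Matrix.diagonal_apply_eq]
      calc (↑(Real.sqrt (gam ↑i)) : ℂ) * ↑(Real.sqrt (gam ↑i))
          = ((Real.sqrt (gam ↑i) * Real.sqrt (gam ↑i) : ℝ) : ℂ) := by push_cast; ring
        _ = ((gam ↑i : ℝ) : ℂ) := by rw [Real.mul_self_sqrt (hg i i.2)]
    · rw [Matrix.diagonal_apply_ne _ h, Matrix.diagonal_apply_ne _ h]
  calc (U * E * G * S)ᴴ * (U * E * G * S)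
      = Sᴴ * Gᴴ * Eᴴ * (Uᴴ * U) * (E * G * S) := by
        simp only [Matrix.conjTranspose_mul, Matrix.mul_assoc]
    _ = Sᴴ * (Gᴴ * ((Eᴴ * E) * (G * S))) := by
        rw [hUsU]
        simp only [Matrix.mul_one, Matrix.one_mul, Matrix.mul_assoc]
    _ = Sᴴ * Matrix.diagonal (fun n : Fin N => ((gam (n : ℕ) : ℝ) : ℂ)) * S := by
        rw [hEE, Matrix.one_mul, hGH, ← hGG]
        simp only [Matrix.mul_assoc]

lemma reduce_T' (hNM : N ≤ M)
    (U : Matrix (Fin M) (Fin M) ℂ) (hU : U ∈ Matrix.unitaryGroup (Fin M) ℂ)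
    (lam : ℕ → ℝ) (hnonneg : ∀ n < M, 0 ≤ lam n)
    (T' : Matrix (Fin M) (Fin N) ℂ) :
    ∃ R : Matrix (Fin M) (Fin M) ℂ, R.PosSemidef ∧ R.rank ≤ N ∧
      (∀ m m' : Fin M, lam (m : ℕ) = 0 → R m m' = 0) ∧
      (1 + T'ᴴ * (U * Matrix.diagonal (fun i : Fin M => ((lam i : ℝ) : ℂ)) * Uᴴ) * T').det
        = (1 + R).det ∧
      (∑ m : Fin M, (if lam (m : ℕ) = 0 then 0 else (R m m).re / lam (m : ℕ)))
        ≤ ((T'ᴴ * T').trace).re := by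
  classical
  have hUsU : Uᴴ * U = 1 := by
    rw [← Matrix.star_eq_conjTranspose]; exact Matrix.mem_unitaryGroup_iff'.mp hU
  have hUUs : U * Uᴴ = 1 := by
    rw [← Matrix.star_eq_conjTranspose]; exact Matrix.mem_unitaryGroup_iff.mp hU
  set W : Matrix (Fin M) (Fin N) ℂ := Uᴴ * T' with hW
  set D : Matrix (Fin M) (Fin M) ℂ :=
    Matrix.diagonal (fun m : Fin M => ((Real.sqrt (lam (m : ℕ)) : ℝ) : ℂ)) with hD
  set X : Matrix (Fin M) (Fin N) ℂ := D * W with hX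
  refine ⟨X * Xᴴ, Matrix.posSemidef_self_mul_conjTranspose X,
    (Matrix.rank_mul_le_left X Xᴴ).trans (Matrix.rank_le_width X), ?_, ?_, ?_⟩
  · -- kernel rows
    intro m m' hm
    rw [Matrix.mul_apply]
    apply Finset.sum_eq_zero
    intro j _
    have hXmj : X m j = 0 := by
      rw [hX, hD, Matrix.diagonal_mul, hm, Real.sqrt_zero, Complex.ofReal_zero, zero_mul]
    rw [hXmj, zero_mul]
  · -- determinant equality
    have hDH : Dᴴ = D := by
      rw [hD]
      ext i j
      rw [Matrix.conjTranspose_apply]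
      by_cases h : i = j
      · subst h
        rw [Matrix.diagonal_apply_eq, Complex.star_def, Complex.conj_ofReal]
      · rw [Matrix.diagonal_apply_ne _ fun hc => h hc.symm, Matrix.diagonal_apply_ne _ h,
          star_zero]
    have hDD : D * D = Matrix.diagonal (fun i : Fin M => ((lam (i : ℕ) : ℝ) : ℂ)) := by
      rw [hD, Matrix.diagonal_mul_diagonal]
      ext i j
      by_cases h : i = j
      · subst h
        simp only [Matrix.diagonal_apply_eq]
        calc (↑(Real.sqrt (lam ↑i)) : ℂ) * ↑(Real.sqrt (lam ↑i))
            = ((Real.sqrt (lam ↑i) * Real.sqrt (lam ↑i) : ℝ) : ℂ) := by push_cast; ring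
          _ = ((lam ↑i : ℝ) : ℂ) := by rw [Real.mul_self_sqrt (hnonneg i i.2)]
      · rw [Matrix.diagonal_apply_ne _ h, Matrix.diagonal_apply_ne _ h]
    have hXX : T'ᴴ * (U * Matrix.diagonal (fun i : Fin M => ((lam i : ℝ) : ℂ)) * Uᴴ) * T'
        = Xᴴ * X := by
      rw [hX, Matrix.conjTranspose_mul, hDH, hW, Matrix.conjTranspose_mul,
        Matrix.conjTranspose_conjTranspose, ← hDD]
      simp only [Matrix.mul_assoc]
    rw [hXX]
    exact Matrix.det_one_add_mul_comm Xᴴ X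
  · -- power bound
    have hWW : Wᴴ * W = T'ᴴ * T' := by
      rw [hW, Matrix.conjTranspose_mul, Matrix.conjTranspose_conjTranspose]
      calc T'ᴴ * U * (Uᴴ * T') = T'ᴴ * (U * Uᴴ) * T' := by simp only [Matrix.mul_assoc]
        _ = T'ᴴ * T' := by rw [hUUs, Matrix.mul_one]
    have h1 : ∀ j, ((Wᴴ * W) j j).re = ∑ m : Fin M, Complex.normSq (W m j) := by
      intro j
      rw [Matrix.mul_apply, Complex.re_sum]
      refine Finset.sum_congr rfl fun m _ => ?_
      rw [Matrix.conjTranspose_apply, Complex.star_def, mul_comm, Complex.mul_conj,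
        Complex.ofReal_re]
    have htr : ((T'ᴴ * T').trace).re = ∑ m : Fin M, ∑ j : Fin N, Complex.normSq (W m j) := by
      rw [← hWW, Matrix.trace, Complex.re_sum]
      simp only [Matrix.diag_apply]
      rw [Finset.sum_congr rfl fun j (_ : j ∈ Finset.univ) => h1 j]
      exact Finset.sum_comm
    have hRmm : ∀ m : Fin M, ((X * Xᴴ) m m).re
        = lam (m : ℕ) * ∑ j : Fin N, Complex.normSq (W m j) := by
      intro m
      rw [Matrix.mul_apply, Complex.re_sum, Finset.mul_sum]
      refine Finset.sum_congr rfl fun j _ => ?_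
      rw [Matrix.conjTranspose_apply, Complex.star_def, Complex.mul_conj, Complex.ofReal_re]
      rw [hX, hD, Matrix.diagonal_mul, Complex.normSq_mul, Complex.normSq_ofReal,
        Real.mul_self_sqrt (hnonneg m m.2)]
    calc ∑ m : Fin M, (if lam (m : ℕ) = 0 then 0 else ((X * Xᴴ) m m).re / lam (m : ℕ))
        ≤ ∑ m : Fin M, ∑ j : Fin N, Complex.normSq (W m j) := by
          refine Finset.sum_le_sum fun m _ => ?_
          by_cases hm : lam (m : ℕ) = 0
          · rw [if_pos hm]
            exact Finset.sum_nonneg fun j _ => Complex.normSq_nonneg _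
          · rw [if_neg hm, hRmm m, mul_div_cancel_left₀ _ hm]
      _ = ((T'ᴴ * T').trace).re := htr.symm


/-- Per-user inverse water-filling optimality: for a Hermitian
positive semidefinite `A = U Λ Uᴴ` (eigenvalues `λ 0 ≥ … ≥ λ (M-1) ≥ 0`), `𝒾 > 0`,
`N` a positive integer, and `r` the largest integer such that
`λ n > ((∏_{i<r} λ i)/2^𝒾)^(1/r)` for all `n < r`, the precoder `T = U_N Γ^(1/2) S`
(with `Γ` given by the inverse water-filling loadings over the first `min N r` modes
and `S` any `N × N` unitary) satisfies `log₂ det (I_N + Tᴴ A T) = 𝒾` and minimizes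
`tr (T'ᴴ T')` among all `M × N` precoders `T'` with `log₂ det (I_N + T'ᴴ A T') = 𝒾`. -/
theorem per_user_inverse_waterfilling_optimal {M : ℕ}
    (A : Matrix (Fin M) (Fin M) ℂ) (hA : A.PosSemidef)
    (U : Matrix (Fin M) (Fin M) ℂ) (hU : U ∈ Matrix.unitaryGroup (Fin M) ℂ)
    (lam : ℕ → ℝ)
    (hdecomp : A = U * Matrix.diagonal (fun i : Fin M => ((lam i : ℝ) : ℂ)) * Uᴴ)
    (hmono : ∀ i j : ℕ, i ≤ j → j < M → lam j ≤ lam i)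
    (hnonneg : ∀ n < M, 0 ≤ lam n)
    (Info : ℝ) (hI : 0 < Info)
    (N : ℕ) (hN : 0 < N) (hNM : N ≤ M)
    (r : ℕ) (hr : 0 < r) (hrM : r ≤ M)
    (hactive : ∀ n < r,
      ((∏ i ∈ Finset.range r, lam i) / 2 ^ Info) ^ ((1 : ℝ) / r) < lam n)
    (hmax : ∀ r', r < r' → r' ≤ M →
      ¬ (∀ n < r',
        ((∏ i ∈ Finset.range r', lam i) / 2 ^ Info) ^ ((1 : ℝ) / r') < lam n))
    (gam : ℕ → ℝ)
    (hgam : ∀ n < N, gam n =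
      if N ≤ r then
        (2 ^ Info / ∏ i ∈ Finset.range N, lam i) ^ ((1 : ℝ) / N) - (lam n)⁻¹
      else if n < r then
        (2 ^ Info / ∏ i ∈ Finset.range r, lam i) ^ ((1 : ℝ) / r) - (lam n)⁻¹
      else 0)
    (S : Matrix (Fin N) (Fin N) ℂ) (hS : S ∈ Matrix.unitaryGroup (Fin N) ℂ)
    (T : Matrix (Fin M) (Fin N) ℂ)
    (hT : T = U.submatrix id (Fin.castLE hNM) *
      Matrix.diagonal (fun n : Fin N => ((Real.sqrt (gam n) : ℝ) : ℂ)) * S) :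
    Real.logb 2 ((1 + Tᴴ * A * T).det).re = Info ∧
    ∀ T' : Matrix (Fin M) (Fin N) ℂ,
      Real.logb 2 ((1 + T'ᴴ * A * T').det).re = Info →
      ((Tᴴ * T).trace).re ≤ ((T'ᴴ * T').trace).re := by
  classical
  obtain ⟨hμ_pos, hact_k, hinact, hμprod, hlam_k_pos⟩ :=
    struct_facts lam Info hmono hnonneg hN hNM hr hrM hactive hmax
  set k := min N r with hkdef
  set μ := muWF lam Info k with hμdef
  have hkN : k ≤ N := min_le_left _ _
  have hkr : k ≤ r := min_le_right _ _
  have hk_pos : 0 < k := lt_min hN hr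
  -- gamma values
  have hgam_val : ∀ n < k, gam n = μ - (lam n)⁻¹ := by
    intro n hn
    rcases le_or_gt N r with hNr | hrN
    · have hkN' : k = N := by rw [hkdef, min_eq_left hNr]
      rw [hgam n (by omega), if_pos hNr, hμdef, muWF, hkN']
    · have hkr' : k = r := by rw [hkdef, min_eq_right hrN.le]
      rw [hgam n (by omega), if_neg (not_le.mpr hrN), if_pos (by omega : n < r), hμdef, muWF,
        hkr']
  have hgam_zero : ∀ n, k ≤ n → n < N → gam n = 0 := by
    intro n hkn hnN
    rcases le_or_gt N r with hNr | hrN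
    · exfalso; rw [hkdef, min_eq_left hNr] at hkn; omega
    · rw [hgam n hnN, if_neg (not_le.mpr hrN), if_neg ?_]
      have : k = r := by rw [hkdef, min_eq_right hrN.le]
      omega
  have hgam_nonneg : ∀ n < N, 0 ≤ gam n := by
    intro n hn
    rcases lt_or_ge n k with h | h
    · rw [hgam_val n h]
      have h1 := hact_k n h
      have h2 := hlam_k_pos n h
      have h4 : lam n * (lam n)⁻¹ = 1 := mul_inv_cancel₀ h2.ne'
      nlinarith [h1, h2, h4]
    · rw [hgam_zero n h hn]
  -- product over the active modes
  have hprodμ : ∏ n ∈ Finset.range k, (lam n * μ) = 2 ^ Info := by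
    rw [Finset.prod_mul_distrib, Finset.prod_const, Finset.card_range, mul_comm, hμprod]
  -- Part 1 : determinant value
  have hdet : ((1 + Tᴴ * A * T).det)
      = ((∏ n ∈ Finset.range N, (1 + gam n * lam n) : ℝ) : ℂ) := by
    rw [hT, hdecomp, TAT_eq hNM U hU S lam gam hgam_nonneg, det_one_add_conj S hS]
    rw [Complex.ofReal_prod]
    rw [← Fin.prod_univ_eq_prod_range (fun n => ((1 + gam n * lam n : ℝ) : ℂ)) N]
    refine Finset.prod_congr rfl fun n _ => ?_
    push_cast
    ring
  have hprod_val : ∏ n ∈ Finset.range N, (1 + gam n * lam n) = 2 ^ Info := by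
    have hsplit : ∏ n ∈ Finset.range N, (1 + gam n * lam n)
        = (∏ n ∈ Finset.range k, (1 + gam n * lam n))
          * ∏ n ∈ Finset.Ico k N, (1 + gam n * lam n) := by
      simp only [Finset.range_eq_Ico]
      exact (Finset.prod_Ico_consecutive _ (Nat.zero_le k) hkN).symm
    have h2 : ∏ n ∈ Finset.Ico k N, (1 + gam n * lam n) = 1 :=
      Finset.prod_eq_one fun n hn => by
        rw [hgam_zero n (Finset.mem_Ico.mp hn).1 (Finset.mem_Ico.mp hn).2, zero_mul, add_zero]
    have h3 : ∏ n ∈ Finset.range k, (1 + gam n * lam n)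
        = ∏ n ∈ Finset.range k, (lam n * μ) :=
      Finset.prod_congr rfl fun n hn => by
        have hn' := Finset.mem_range.mp hn
        rw [hgam_val n hn']
        have hlp := hlam_k_pos n hn'
        field_simp
        ring
    rw [hsplit, h2, h3, mul_one, hprodμ]
  have hpart1 : Real.logb 2 ((1 + Tᴴ * A * T).det).re = Info := by
    rw [hdet, Complex.ofReal_re, hprod_val]
    exact Real.logb_rpow (by norm_num) (by norm_num)
  refine ⟨hpart1, ?_⟩
  intro T' hT'
  -- power of T
  have hTTtr : ((Tᴴ * T).trace).re = ∑ n ∈ Finset.range k, gam n := by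
    rw [hT, TT_eq hNM U hU S gam hgam_nonneg, trace_conj S hS, Complex.re_sum]
    simp only [Complex.ofReal_re]
    rw [Fin.sum_univ_eq_sum_range (fun n => gam n) N]
    exact (Finset.sum_subset (Finset.range_subset_range.mpr hkN) fun x hxN hxk =>
      hgam_zero x (by simpa using hxk) (Finset.mem_range.mp hxN)).symm
  rw [hTTtr]
  -- reduction of the competitor
  obtain ⟨R, hRps, hRrank, hRker, hRdet, hRpow⟩ := reduce_T' hNM U hU lam hnonneg T'
  have hlog2pos : (0:ℝ) < Real.log 2 := Real.log_pos (by norm_num)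
  have hconstraint : Real.log ((1 + R).det).re = Info * Real.log 2 := by
    rw [hdecomp] at hT'
    rw [hRdet] at hT'
    rw [Real.logb, div_eq_iff hlog2pos.ne'] at hT'
    exact hT'
  have hkey := key_bound lam μ hμ_pos hmono hnonneg hNM R hRps hRrank hRker
  -- value of the gfun sum
  have hgsum : ∑ n ∈ Finset.range N, gfun μ (lam n)
      = Info * Real.log 2 - (∑ n ∈ Finset.range k, gam n) / μ := by
    have h0 : ∑ n ∈ Finset.range N, gfun μ (lam n)
        = ∑ n ∈ Finset.range k, gfun μ (lam n) :=
      (Finset.sum_subset (Finset.range_subset_range.mpr hkN) fun x hxN hxk => by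
        rw [gfun, if_pos (hinact x (by simpa using hxk) (Finset.mem_range.mp hxN))]).symm
    have h1 : ∀ n ∈ Finset.range k, gfun μ (lam n)
        = Real.log (lam n * μ) - gam n / μ := by
      intro n hn
      have hn' := Finset.mem_range.mp hn
      have hl := hlam_k_pos n hn'
      have ha := hact_k n hn'
      rw [gfun, if_neg (not_le.mpr ha), hgam_val n hn']
      field_simp
      ring
    rw [h0, Finset.sum_congr rfl h1, Finset.sum_sub_distrib, ← Finset.sum_div]
    congr 1
    rw [← Real.log_prod (fun n hn => by
      have := hact_k n (Finset.mem_range.mp hn); positivity), hprodμ, Real.log_rpow two_pos]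
  rw [hconstraint, hgsum] at hkey
  set P := ∑ m : Fin M, (if lam (m : ℕ) = 0 then 0 else (R m m).re / lam (m : ℕ)) with hP
  have h2 : (∑ n ∈ Finset.range k, gam n) / μ ≤ P / μ := by linarith
  have h3 : ∑ n ∈ Finset.range k, gam n ≤ P := by
    have := mul_le_mul_of_nonneg_right h2 hμ_pos.le
    rwa [div_mul_cancel₀ _ hμ_pos.ne', div_mul_cancel₀ _ hμ_pos.ne'] at this
  exact h3.trans hRpow
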